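/- The Hencky–Mises type law σ(τ) = ((λ + μ/2) − (μ/2)(1 + dev(τ))^{−1/2}) tr(τ) I + μ(1 + (1 + dev(τ))^{−1/2}) τ, with λ, μ > 0 and dev(τ) = tr(τ²) − (1/d) tr(τ)², satisfies σ(0) = 0 and the growth bound ‖σ(τ)‖ ≤ (d(λ + μ) + 2μ)‖τ‖ for all symmetric τ. -/

import Mathlib

/-- Frobenius inner product of two matrices. -/
def frob {d : ℕ} (A B : Matrix (Fin d) (Fin d) ℝ) : ℝ :=
  ∑ i : Fin d, ∑ j : Fin d, A i j * B i j

/-- Frobenius norm of a matrix. -/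
noncomputable def frobNorm {d : ℕ} (A : Matrix (Fin d) (Fin d) ℝ) : ℝ :=
  Real.sqrt (frob A A)

/-- Deviatoric quantity `dev(τ) = tr(τ²) − (1/d) tr(τ)²`. -/
noncomputable def dev {d : ℕ} (τ : Matrix (Fin d) (Fin d) ℝ) : ℝ :=
  Matrix.trace (τ * τ) - (1 / (d : ℝ)) * (Matrix.trace τ) ^ 2

attribute [local instance] Matrix.frobeniusSeminormedAddCommGroup
  Matrix.frobeniusNormedAddCommGroup Matrix.frobeniusIsBoundedSMul Matrix.frobeniusNormedSpace

lemma frob_self_nonneg {d : ℕ} (A : Matrix (Fin d) (Fin d) ℝ) : 0 ≤ frob A A := by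
  apply Finset.sum_nonneg; intro i _; apply Finset.sum_nonneg; intro j _; exact mul_self_nonneg _

lemma frobNorm_eq_norm {d : ℕ} (A : Matrix (Fin d) (Fin d) ℝ) : frobNorm A = ‖A‖ := by
  rw [Matrix.frobenius_norm_def, frobNorm, Real.sqrt_eq_rpow]
  congr 1
  unfold frob
  congr 1; ext i; congr 1; ext j
  rw [Real.norm_eq_abs, show ((2:ℝ)) = ((2:ℕ):ℝ) by norm_num, Real.rpow_natCast, sq_abs, sq]

lemma diag_sq_le_frob {d : ℕ} (A : Matrix (Fin d) (Fin d) ℝ) :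
    ∑ i : Fin d, (A i i) ^ 2 ≤ frob A A := by
  unfold frob
  apply Finset.sum_le_sum
  intro i _
  calc (A i i) ^ 2 = ∑ j ∈ {i}, A i j * A i j := by simp [sq]
    _ ≤ ∑ j : Fin d, A i j * A i j :=
      Finset.sum_le_sum_of_subset_of_nonneg (Finset.subset_univ _)
        (fun j _ _ => mul_self_nonneg _)

lemma trace_sq_le {d : ℕ} (A : Matrix (Fin d) (Fin d) ℝ) :
    (Matrix.trace A) ^ 2 ≤ (d : ℝ) * frob A A := by
  have h := sq_sum_le_card_mul_sum_sq (s := (Finset.univ : Finset (Fin d)))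
    (f := fun i => A i i)
  simp only [Finset.card_univ, Fintype.card_fin] at h
  calc (Matrix.trace A) ^ 2 = (∑ i : Fin d, A i i) ^ 2 := rfl
    _ ≤ (d : ℝ) * ∑ i : Fin d, (A i i) ^ 2 := h
    _ ≤ (d : ℝ) * frob A A := by
        exact mul_le_mul_of_nonneg_left (diag_sq_le_frob A) (Nat.cast_nonneg d)

lemma dev_nonneg {d : ℕ} (hd : 0 < d) (τ : Matrix (Fin d) (Fin d) ℝ) (hτ : τ.IsSymm) :
    0 ≤ dev τ := by
  have htr : Matrix.trace (τ * τ) = frob τ τ := by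
    unfold frob
    rw [Matrix.trace]
    simp only [Matrix.diag, Matrix.mul_apply]
    congr 1; ext i; congr 1; ext j
    rw [show τ j i = τ i j from by rw [← hτ.apply]]
  have hd' : (0:ℝ) < d := Nat.cast_pos.mpr hd
  have := trace_sq_le τ
  rw [dev, htr, sub_nonneg, div_mul_eq_mul_div, one_mul, div_le_iff₀ hd']
  linarith [trace_sq_le τ]

lemma abs_trace_le {d : ℕ} (τ : Matrix (Fin d) (Fin d) ℝ) :
    |Matrix.trace τ| ≤ Real.sqrt d * frobNorm τ := by
  rw [← Real.sqrt_sq_eq_abs, frobNorm, ← Real.sqrt_mul (Nat.cast_nonneg d)]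
  exact Real.sqrt_le_sqrt (trace_sq_le τ)

lemma frobNorm_one {d : ℕ} : frobNorm (1 : Matrix (Fin d) (Fin d) ℝ) = Real.sqrt d := by
  rw [frobNorm]
  congr 1
  unfold frob
  simp [Matrix.one_apply]

/-- The Hencky–Mises type law
`σ(τ) = ((λ + μ/2) − (μ/2)(1 + dev τ)^{-1/2}) tr(τ) I + μ (1 + (1 + dev τ)^{-1/2}) τ`
satisfies `σ(0) = 0` and the growth bound `‖σ(τ)‖ ≤ (d(λ+μ) + 2μ) ‖τ‖`. -/
theorem hencky_mises_zero_and_growth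
    {d : ℕ} (hd : 0 < d) (lam mu : ℝ) (hlam : 0 < lam) (hmu : 0 < mu)
    (σ : Matrix (Fin d) (Fin d) ℝ → Matrix (Fin d) (Fin d) ℝ)
    (hσ : ∀ τ : Matrix (Fin d) (Fin d) ℝ,
      σ τ = (((lam + mu / 2) - mu / 2 * (1 / Real.sqrt (1 + dev τ))) * Matrix.trace τ) •
              (1 : Matrix (Fin d) (Fin d) ℝ)
            + (mu * (1 + 1 / Real.sqrt (1 + dev τ))) • τ) :
    σ 0 = 0 ∧
    ∀ τ : Matrix (Fin d) (Fin d) ℝ, τ.IsSymm →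
      frobNorm (σ τ) ≤ ((d : ℝ) * (lam + mu) + 2 * mu) * frobNorm τ := by
  constructor
  · rw [hσ 0]
    simp
  · intro τ hτ
    set s : ℝ := 1 / Real.sqrt (1 + dev τ) with hs
    have hdev := dev_nonneg hd τ hτ
    have hsqrt : (1:ℝ) ≤ Real.sqrt (1 + dev τ) := by
      have := Real.sqrt_le_sqrt (show (1:ℝ) ≤ 1 + dev τ by linarith)
      simpa using this
    have hs0 : 0 ≤ s := by positivity
    have hs1 : s ≤ 1 := by
      rw [hs, div_le_one (by linarith)]; exact hsqrt
    set c1 : ℝ := (lam + mu / 2) - mu / 2 * s with hc1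
    set c2 : ℝ := mu * (1 + s) with hc2
    have hc1b : |c1| ≤ lam + mu := by
      rw [abs_le, hc1]; constructor <;> nlinarith
    have hc2b : |c2| ≤ 2 * mu := by
      rw [abs_le, hc2]; constructor <;> nlinarith
    have habs : |Matrix.trace τ| ≤ Real.sqrt d * ‖τ‖ := by
      rw [← frobNorm_eq_norm]; exact abs_trace_le τ
    rw [hσ τ, frobNorm_eq_norm]
    have htri : ‖(c1 * Matrix.trace τ) • (1 : Matrix (Fin d) (Fin d) ℝ) + c2 • τ‖ ≤
        ‖(c1 * Matrix.trace τ) • (1 : Matrix (Fin d) (Fin d) ℝ)‖ + ‖c2 • τ‖ :=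
      norm_add_le _ _
    calc ‖(c1 * Matrix.trace τ) • (1 : Matrix (Fin d) (Fin d) ℝ) + c2 • τ‖
        ≤ ‖(c1 * Matrix.trace τ) • (1 : Matrix (Fin d) (Fin d) ℝ)‖ + ‖c2 • τ‖ := htri
      _ = |c1 * Matrix.trace τ| * ‖(1 : Matrix (Fin d) (Fin d) ℝ)‖ + |c2| * ‖τ‖ := by
          rw [norm_smul, norm_smul, Real.norm_eq_abs, Real.norm_eq_abs]
      _ = |c1| * |Matrix.trace τ| * Real.sqrt d + |c2| * ‖τ‖ := by
          rw [abs_mul, ← frobNorm_one (d := d), frobNorm_eq_norm]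
      _ ≤ (lam + mu) * (Real.sqrt d * ‖τ‖) * Real.sqrt d + (2 * mu) * ‖τ‖ := by
          apply add_le_add
          · apply mul_le_mul_of_nonneg_right _ (Real.sqrt_nonneg _)
            exact mul_le_mul hc1b habs (abs_nonneg _) (by linarith)
          · exact mul_le_mul_of_nonneg_right hc2b (norm_nonneg _)
      _ = ((d : ℝ) * (lam + mu) + 2 * mu) * frobNorm τ := by
          rw [frobNorm_eq_norm]
          have h : Real.sqrt d * Real.sqrt d = (d : ℝ) :=
            Real.mul_self_sqrt (Nat.cast_nonneg d)
          linear_combination (lam + mu) * ‖τ‖ * h
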